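/- Let (Ω, 𝔉, μ) be a finite measure space, let γ : ℝ^d → [0, ∞) be a nonnegative, convex function which is Lipschitz continuous with constant L ≥ 0, and let Φ(W) := ∫_Ω γ(W(x)) dμ(x) for W ∈ L²(μ; ℝ^d). Then for all W, W* ∈ L²(μ; ℝ^d) the following are equivalent: (a) W* is a subgradient of Φ at W, i.e. ⟪W*, Z − W⟫ ≤ Φ(Z) − Φ(W) for every Z ∈ L²(μ; ℝ^d); (b) for μ-almost every x ∈ Ω, W*(x) ∈ ∂γ(W(x)), i.e. ⟨W*(x), ξ − W(x)⟩ ≤ γ(ξ) − γ(W(x)) for every ξ ∈ ℝ^d. -/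

import Mathlib

open Filter MeasureTheory

private lemma aux_integrable_inner {d : ℕ} {Ω : Type*} [MeasurableSpace Ω] {μ : Measure Ω}
    {f g : Ω → EuclideanSpace ℝ (Fin d)} (hf : MemLp f 2 μ) (hg : MemLp g 2 μ) :
    Integrable (fun x => (inner ℝ (f x) (g x) : ℝ)) μ := by
  have h := MeasureTheory.L2.integrable_inner (𝕜 := ℝ) (hf.toLp f) (hg.toLp g)
  refine h.congr ?_
  filter_upwards [hf.coeFn_toLp, hg.coeFn_toLp] with x h1 h2
  rw [h1, h2]

private lemma aux_integrable_gamma {d : ℕ} {Ω : Type*} [MeasurableSpace Ω] {μ : Measure Ω}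
    [IsFiniteMeasure μ] {γ : EuclideanSpace ℝ (Fin d) → ℝ} {L : ℝ}
    (hγ_nonneg : ∀ w, 0 ≤ γ w) (hL : 0 ≤ L) (hγ_lip : LipschitzWith (Real.toNNReal L) γ)
    {V : Ω → EuclideanSpace ℝ (Fin d)} (hV : MemLp V 2 μ) :
    Integrable (fun x => γ (V x)) μ := by
  have hV1 : Integrable V μ :=
    memLp_one_iff_integrable.mp (hV.mono_exponent one_le_two)
  refine Integrable.mono' ((integrable_const (γ 0)).add (hV1.norm.const_mul L))
    (hγ_lip.continuous.comp_aestronglyMeasurable hV.1) ?_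
  filter_upwards with x
  simp only [Pi.add_apply]
  rw [Real.norm_eq_abs, abs_of_nonneg (hγ_nonneg _)]
  have h1 := hγ_lip.dist_le_mul (V x) 0
  rw [Real.coe_toNNReal L hL, Real.dist_eq, dist_zero_right] at h1
  have h2 : γ (V x) - γ 0 ≤ L * ‖V x‖ := (le_abs_self _).trans h1
  linarith

theorem subdifferential_integral_functional_iff
    {d : ℕ} {Ω : Type*} [MeasurableSpace Ω] (μ : Measure Ω) [IsFiniteMeasure μ]
    (γ : EuclideanSpace ℝ (Fin d) → ℝ)
    (hγ_nonneg : ∀ w, 0 ≤ γ w)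
    (hγ_convex : ConvexOn ℝ Set.univ γ)
    (L : ℝ) (hL : 0 ≤ L) (hγ_lip : LipschitzWith (Real.toNNReal L) γ)
    (W Wstar : Ω → EuclideanSpace ℝ (Fin d))
    (hW : MemLp W 2 μ) (hWstar : MemLp Wstar 2 μ) :
    (∀ Z : Ω → EuclideanSpace ℝ (Fin d), MemLp Z 2 μ →
      ∫ x, (inner ℝ (Wstar x) (Z x - W x) : ℝ) ∂μ ≤
        (∫ x, γ (Z x) ∂μ) - ∫ x, γ (W x) ∂μ) ↔
    (∀ᵐ x ∂μ, ∀ ξ : EuclideanSpace ℝ (Fin d),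
      (inner ℝ (Wstar x) (ξ - W x) : ℝ) ≤ γ ξ - γ (W x)) := by
  classical
  have hγW_int : Integrable (fun x => γ (W x)) μ :=
    aux_integrable_gamma hγ_nonneg hL hγ_lip hW
  constructor
  · intro h
    obtain ⟨D, hDc, hDd⟩ := TopologicalSpace.exists_countable_dense (EuclideanSpace ℝ (Fin d))
    have key : ∀ ξ ∈ D, ∀ᵐ x ∂μ, (inner ℝ (Wstar x) (ξ - W x) : ℝ) ≤ γ ξ - γ (W x) := by
      intro ξ _
      have hinner_int : Integrable (fun x => (inner ℝ (Wstar x) (ξ - W x) : ℝ)) μ :=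
        aux_integrable_inner hWstar ((memLp_const ξ).sub hW)
      have hg_int : Integrable
          (fun x => (γ ξ - γ (W x)) - (inner ℝ (Wstar x) (ξ - W x) : ℝ)) μ :=
        ((integrable_const (γ ξ)).sub hγW_int).sub hinner_int
      have hae : 0 ≤ᵐ[μ]
          fun x => (γ ξ - γ (W x)) - (inner ℝ (Wstar x) (ξ - W x) : ℝ) := by
        refine ae_nonneg_of_forall_setIntegral_nonneg hg_int ?_
        intro s hs hμs
        set Z : Ω → EuclideanSpace ℝ (Fin d) := s.piecewise (fun _ => ξ) W with hZdef
        have hZ : MemLp Z 2 μ :=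
          MemLp.piecewise hs ((memLp_const ξ).restrict s) (hW.restrict sᶜ)
        have hγZ_int : Integrable (fun x => γ (Z x)) μ :=
          aux_integrable_gamma hγ_nonneg hL hγ_lip hZ
        have hZinner_int : Integrable (fun x => (inner ℝ (Wstar x) (Z x - W x) : ℝ)) μ :=
          aux_integrable_inner hWstar (hZ.sub hW)
        have hmain := h Z hZ
        have e1 : (fun x => (inner ℝ (Wstar x) (Z x - W x) : ℝ)) =
            s.indicator (fun x => (inner ℝ (Wstar x) (ξ - W x) : ℝ)) := by
          funext x
          by_cases hx : x ∈ s
          · simp [hZdef, Set.piecewise, Set.indicator, hx]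
          · simp [hZdef, Set.piecewise, Set.indicator, hx]
        have e2 : (fun x => γ (Z x) - γ (W x)) =
            s.indicator (fun x => γ ξ - γ (W x)) := by
          funext x
          by_cases hx : x ∈ s
          · simp [hZdef, Set.piecewise, Set.indicator, hx]
          · simp [hZdef, Set.piecewise, Set.indicator, hx]
        have h3 : ∫ x, (inner ℝ (Wstar x) (Z x - W x) : ℝ) ∂μ =
            ∫ x in s, (inner ℝ (Wstar x) (ξ - W x) : ℝ) ∂μ := by
          rw [e1, integral_indicator hs]
        have h4 : (∫ x, γ (Z x) ∂μ) - ∫ x, γ (W x) ∂μ =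
            ∫ x in s, (γ ξ - γ (W x)) ∂μ := by
          rw [← integral_sub hγZ_int hγW_int]
          simp_rw [e2]
          rw [integral_indicator hs]
        rw [h3, h4] at hmain
        have hA : Integrable (fun x => γ ξ - γ (W x)) (μ.restrict s) :=
          ((integrable_const (γ ξ)).sub hγW_int).integrableOn
        have h6 : ∫ x in s, (γ ξ - γ (W x) - (inner ℝ (Wstar x) (ξ - W x) : ℝ)) ∂μ =
            (∫ x in s, (γ ξ - γ (W x)) ∂μ) - ∫ x in s, (inner ℝ (Wstar x) (ξ - W x) : ℝ) ∂μ :=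
          integral_sub hA hinner_int.integrableOn
        rw [h6]
        linarith
      filter_upwards [hae] with x hx
      simpa using hx
    have hae := (ae_ball_iff hDc).mpr key
    filter_upwards [hae] with x hx ξ
    have hcl : IsClosed {ξ : EuclideanSpace ℝ (Fin d) |
        (inner ℝ (Wstar x) (ξ - W x) : ℝ) ≤ γ ξ - γ (W x)} :=
      isClosed_le (Continuous.inner continuous_const (continuous_id.sub continuous_const))
        ((hγ_lip.continuous).sub continuous_const)
    have hsub : D ⊆ {ξ : EuclideanSpace ℝ (Fin d) |
        (inner ℝ (Wstar x) (ξ - W x) : ℝ) ≤ γ ξ - γ (W x)} := fun ζ hζ => hx ζ hζ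
    have : closure D ⊆ {ξ : EuclideanSpace ℝ (Fin d) |
        (inner ℝ (Wstar x) (ξ - W x) : ℝ) ≤ γ ξ - γ (W x)} := closure_minimal hsub hcl
    have := this (by rw [hDd.closure_eq]; trivial : ξ ∈ closure D)
    exact this
  · intro h Z hZ
    have hγZ_int : Integrable (fun x => γ (Z x)) μ :=
      aux_integrable_gamma hγ_nonneg hL hγ_lip hZ
    have hinner_int : Integrable (fun x => (inner ℝ (Wstar x) (Z x - W x) : ℝ)) μ :=
      aux_integrable_inner hWstar (hZ.sub hW)
    have hmono : ∀ᵐ x ∂μ, (inner ℝ (Wstar x) (Z x - W x) : ℝ) ≤ γ (Z x) - γ (W x) :=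
      h.mono fun x hx => hx (Z x)
    calc ∫ x, (inner ℝ (Wstar x) (Z x - W x) : ℝ) ∂μ
        ≤ ∫ x, (γ (Z x) - γ (W x)) ∂μ :=
          integral_mono_ae hinner_int (hγZ_int.sub hγW_int) hmono
      _ = (∫ x, γ (Z x) ∂μ) - ∫ x, γ (W x) ∂μ := integral_sub hγZ_int hγW_int
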